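/- Let G be a nonempty compact Hausdorff topological group, C G its cone with the quotient topology, and t̄ : C G → ℝ the continuous map induced by (g,t) ↦ t. Let E := { c : ℕ → C G | the set {i ∈ ℕ : t̄(c i) ≠ 0} is finite and ∑_i t̄(c i) = 1 }, equipped with the subspace topology inherited from the product topology on ℕ → C G. Then E is not a Baire space (in particular E is not completely metrizable). -/

import Mathlib

open Set

/-- The cone relation on `X × [0,1]`: identify `(x,0) ~ (x',0)`. -/
abbrev coneRel (X : Type*) : X × Icc (0 : ℝ) 1 → X × Icc (0 : ℝ) 1 → Prop :=
  fun p q => p = q ∨ ((p.2 : ℝ) = 0 ∧ (q.2 : ℝ) = 0)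

/-- The cone `C X` with the quotient topology. -/
abbrev Cone (X : Type*) := Quot (coneRel X)

/-- The continuous coordinate map `t̄ : C X → ℝ`, `[x,t] ↦ t`. -/
def tbar (X : Type*) : Cone X → ℝ :=
  Quot.lift (fun p => (p.2 : ℝ))
    (by
      rintro a b (rfl | ⟨h0a, h0b⟩)
      · rfl
      · show (a.2 : ℝ) = (b.2 : ℝ)
        rw [h0a, h0b])

lemma continuous_tbar (X : Type*) [TopologicalSpace X] : Continuous (tbar X) :=
  continuous_quot_lift _ (continuous_subtype_val.comp continuous_snd)

lemma tbar_mem_Icc (X : Type*) (c : Cone X) : tbar X c ∈ Icc (0 : ℝ) 1 := by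
  induction c using Quot.ind with
  | _ p => exact p.2.2

lemma eq_mk_of_tbar_zero {X : Type*} {c : Cone X} (h : tbar X c = 0) (g : X)
    (t : Icc (0 : ℝ) 1) (ht : (t : ℝ) = 0) : c = Quot.mk (coneRel X) (g, t) := by
  obtain ⟨p, hp⟩ := Quot.exists_rep c
  have hp2 : (p.2 : ℝ) = 0 := by rw [← hp] at h; exact h
  rw [← hp]
  exact Quot.sound (Or.inr ⟨hp2, ht⟩)

variable (G : Type*) [Group G] [TopologicalSpace G] [IsTopologicalGroup G]
  [CompactSpace G] [T2Space G] [Nonempty G]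

/-- The Milnor-type total space: sequences in the cone `C G` whose coordinate
`t̄` has finite support and sums to `1`, topologized as a subspace of the
product `ℕ → C G`. -/
def milnorSet : Set (ℕ → Cone G) :=
  {c | {i : ℕ | tbar G (c i) ≠ 0}.Finite ∧ ∑' i : ℕ, tbar G (c i) = 1}

/-- For a nonempty compact Hausdorff topological group `G`, the Milnor-type
total space `E` (sequences in the cone with finitely supported coordinates
summing to `1`, in the subspace topology from the product `ℕ → C G`) is not
a Baire space; in particular it is not completely metrizable. -/
theorem milnorSet_not_baireSpace : ¬ BaireSpace (milnorSet G) := by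
  intro hB
  obtain ⟨g0⟩ := ‹Nonempty G›
  have hone : (1 : ℝ) ∈ Icc (0 : ℝ) 1 := ⟨zero_le_one, le_rfl⟩
  have hzero : (0 : ℝ) ∈ Icc (0 : ℝ) 1 := ⟨le_rfl, zero_le_one⟩
  -- A base point, showing the space is nonempty.
  let c0 : ℕ → Cone G := fun i =>
    if i = 0 then Quot.mk _ (g0, ⟨1, hone⟩) else Quot.mk _ (g0, ⟨0, hzero⟩)
  have hc0tbar : ∀ i, tbar G (c0 i) = if i = 0 then (1 : ℝ) else 0 := by
    intro i
    by_cases h : i = 0 <;> simp [c0, h, tbar]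
  have hc0 : c0 ∈ milnorSet G := by
    constructor
    · apply Set.Finite.subset (Set.finite_singleton 0)
      intro i hi
      simp only [mem_setOf_eq, hc0tbar i] at hi
      by_contra h
      simp only [mem_singleton_iff] at h
      simp [h] at hi
    · have : (fun i => tbar G (c0 i)) = fun i => if i = 0 then (1 : ℝ) else 0 :=
        funext hc0tbar
      rw [this]
      exact tsum_ite_eq 0 (fun _ => (1 : ℝ))
  haveI : Nonempty (milnorSet G) := ⟨⟨c0, hc0⟩⟩
  -- The closed covering by "support contained in [0,n)" sets.
  set F : ℕ → Set (milnorSet G) :=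
    fun n => {x | ∀ i, n ≤ i → tbar G (x.val i) = 0} with hF
  have hFc : ∀ n, IsClosed (F n) := by
    intro n
    have : F n = ⋂ i ∈ Ici n, {x : milnorSet G | tbar G (x.val i) = 0} := by
      ext x
      simp [hF, Set.mem_iInter]
    rw [this]
    refine isClosed_biInter fun i _ => ?_
    exact isClosed_eq
      ((continuous_tbar G).comp ((continuous_apply i).comp continuous_subtype_val))
      continuous_const
  have hFu : ⋃ n, F n = univ := by
    ext x
    simp only [mem_iUnion, mem_univ, iff_true]
    obtain ⟨hfin, _⟩ := x.2
    refine ⟨hfin.toFinset.sup id + 1, fun i hi => ?_⟩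
    by_contra h
    have hi' : i ∈ hfin.toFinset := by simpa using h
    have := Finset.le_sup (f := id) hi'
    simp only [id] at this
    omega
  obtain ⟨n, x, hx⟩ := nonempty_interior_of_iUnion_of_closed hFc hFu
  rw [mem_interior] at hx
  obtain ⟨U, hUF, hUo, hxU⟩ := hx
  rw [isOpen_induced_iff] at hUo
  obtain ⟨V, hVo, hVU⟩ := hUo
  set c : ℕ → Cone G := x.val with hc
  have hcV : c ∈ V := by
    have : x ∈ U := hxU
    rw [← hVU] at this
    exact this
  obtain ⟨hfin, hsum⟩ := x.2
  have hxn : ∀ i, n ≤ i → tbar G (c i) = 0 := hUF hxU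
  -- find a coordinate with positive weight
  have hex : ∃ j, tbar G (c j) ≠ 0 := by
    by_contra h
    push_neg at h
    have : ∑' i, tbar G (c i) = 0 := by simp [h]
    rw [hsum] at this
    exact one_ne_zero this
  obtain ⟨j, hj⟩ := hex
  set tj : ℝ := tbar G (c j) with htjdef
  have htjIcc := tbar_mem_Icc G (c j)
  have htjpos : 0 < tj := lt_of_le_of_ne htjIcc.1 (Ne.symm hj)
  have htj1 : tj ≤ 1 := htjIcc.2
  obtain ⟨⟨gj, tj'⟩, hrep⟩ := Quot.exists_rep (c j)
  have htj' : (tj' : ℝ) = tj := by rw [htjdef, ← hrep]; rfl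
  set m : ℕ := max n (j + 1) with hm
  have hmn : n ≤ m := le_max_left _ _
  have hjm : j ≠ m := by omega
  have hcm : tbar G (c m) = 0 := hxn m hmn
  -- the perturbation path
  set γ : ℝ → (ℕ → Cone G) := fun s =>
    Function.update
      (Function.update c j
        (Quot.mk _ (gj, projIcc (0 : ℝ) 1 zero_le_one (tj * (1 - s)))))
      m (Quot.mk _ (g0, projIcc (0 : ℝ) 1 zero_le_one (tj * s))) with hγ
  have hγm : ∀ s, γ s m = Quot.mk _ (g0, projIcc (0 : ℝ) 1 zero_le_one (tj * s)) := by
    intro s; simp [hγ]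
  have hγj : ∀ s, γ s j =
      Quot.mk _ (gj, projIcc (0 : ℝ) 1 zero_le_one (tj * (1 - s))) := by
    intro s; simp [hγ, Function.update_of_ne hjm]
  have hγo : ∀ i, i ≠ j → i ≠ m → ∀ s, γ s i = c i := by
    intro i hij him s
    simp [hγ, Function.update_of_ne him, Function.update_of_ne hij]
  have hγcont : Continuous γ := by
    refine continuous_pi fun i => ?_
    by_cases him : i = m
    · subst him
      have : (fun s => γ s m) =
          fun s => Quot.mk (coneRel G) (g0, projIcc (0 : ℝ) 1 zero_le_one (tj * s)) :=
        funext fun s => hγm s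
      rw [this]
      exact continuous_quot_mk.comp (continuous_const.prodMk
        (continuous_projIcc.comp (continuous_const.mul continuous_id)))
    by_cases hij : i = j
    · have : (fun s => γ s i) =
          fun s => Quot.mk (coneRel G) (gj, projIcc (0 : ℝ) 1 zero_le_one (tj * (1 - s))) :=
        funext fun s => by rw [hij]; exact hγj s
      rw [this]
      exact continuous_quot_mk.comp (continuous_const.prodMk
        (continuous_projIcc.comp (continuous_const.mul
          (continuous_const.sub continuous_id))))
    · have : (fun s => γ s i) = fun _ => c i := funext fun s => hγo i hij him s
      rw [this]
      exact continuous_const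
  have hγ0 : γ 0 = c := by
    funext i
    by_cases him : i = m
    · subst him
      rw [hγm]
      have : projIcc (0 : ℝ) 1 zero_le_one (tj * 0) = ⟨0, hzero⟩ := by
        simp [projIcc]
      rw [this]
      exact (eq_mk_of_tbar_zero hcm g0 ⟨0, hzero⟩ rfl).symm
    by_cases hij : i = j
    · rw [hij, hγj]
      have h1 : tj * (1 - 0) = tj := by ring
      rw [h1, projIcc_of_mem zero_le_one htjIcc]
      have hsub : (⟨tbar G (c j), htjIcc⟩ : Icc (0 : ℝ) 1) = tj' :=
        Subtype.ext htj'.symm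
      rw [hsub]
      exact hrep
    · exact hγo i hij him 0
  -- pick a small positive parameter staying in V
  have hpre : IsOpen (γ ⁻¹' V) := hγcont.isOpen_preimage V hVo
  have h0pre : (0 : ℝ) ∈ γ ⁻¹' V := by simp [hγ0, hcV]
  obtain ⟨δ, hδpos, hδ⟩ := Metric.isOpen_iff.1 hpre 0 h0pre
  set s : ℝ := min (δ / 2) (1 / 2) with hs
  have hspos : 0 < s := lt_min (by linarith) (by norm_num)
  have hs12 : s ≤ 1 / 2 := min_le_right _ _
  have hsball : s ∈ Metric.ball (0 : ℝ) δ := by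
    rw [Metric.mem_ball, Real.dist_eq, sub_zero, abs_of_pos hspos]
    have : s ≤ δ / 2 := min_le_left _ _
    linarith
  have hγsV : γ s ∈ V := hδ hsball
  -- compute the coordinates of γ s
  have hts_mem : tj * s ∈ Icc (0 : ℝ) 1 := by
    constructor
    · positivity
    · nlinarith
  have hts_mem' : tj * (1 - s) ∈ Icc (0 : ℝ) 1 := by
    constructor
    · nlinarith
    · nlinarith
  have htbm : tbar G (γ s m) = tj * s := by
    rw [hγm]
    show ((projIcc (0 : ℝ) 1 zero_le_one (tj * s) : Icc (0:ℝ) 1) : ℝ) = tj * s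
    rw [projIcc_of_mem zero_le_one hts_mem]
  have htbj : tbar G (γ s j) = tj * (1 - s) := by
    rw [hγj]
    show ((projIcc (0 : ℝ) 1 zero_le_one (tj * (1 - s)) : Icc (0:ℝ) 1) : ℝ) = tj * (1 - s)
    rw [projIcc_of_mem zero_le_one hts_mem']
  -- γ s lies in the Milnor set
  have hkey : (fun i => tbar G (γ s i)) = fun i =>
      tbar G (c i) + ((if i = m then tj * s else 0) - (if i = j then tj * s else 0)) := by
    funext i
    by_cases him : i = m
    · subst him
      rw [htbm, hcm, if_pos rfl, if_neg (Ne.symm hjm)]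
      ring
    by_cases hij : i = j
    · subst hij
      rw [htbj, if_neg him, if_pos rfl, ← htjdef]
      ring
    · rw [hγo i hij him, if_neg him, if_neg hij]
      ring
  have hfsum : Summable (fun i => tbar G (c i)) := by
    apply summable_of_ne_finset_zero (s := hfin.toFinset)
    intro i hi
    by_contra h
    exact hi (hfin.mem_toFinset.2 h)
  have hgsum : Summable (fun i : ℕ => if i = m then tj * s else 0) :=
    (hasSum_ite_eq m (tj * s)).summable
  have hhsum : Summable (fun i : ℕ => if i = j then tj * s else 0) :=
    (hasSum_ite_eq j (tj * s)).summable
  have hγsE : γ s ∈ milnorSet G := by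
    constructor
    · apply Set.Finite.subset ((hfin.insert j).insert m)
      intro i hi
      simp only [mem_setOf_eq] at hi
      by_cases him : i = m
      · exact Or.inl him
      by_cases hij : i = j
      · exact Or.inr (Or.inl hij)
      · right; right
        rw [hγo i hij him] at hi
        exact hi
    · rw [hkey, Summable.tsum_add hfsum (hgsum.sub hhsum), Summable.tsum_sub hgsum hhsum,
        tsum_ite_eq, tsum_ite_eq, hsum]
      ring
  -- contradiction: γ s is in U ⊆ F n but its m-th coordinate has nonzero weight
  have hγsU : (⟨γ s, hγsE⟩ : milnorSet G) ∈ U := by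
    rw [← hVU]
    exact hγsV
  have : tbar G (γ s m) = 0 := hUF hγsU m hmn
  rw [htbm] at this
  nlinarith
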